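/- Let $n\geq 3$ and let $L_S$ be the $n\times n$ matrix with diagonal 4, super/sub-diagonal $-1$, and corner entries $+1$ in positions $(1,n),(n,1)$. All eigenvalues $\beta_1,\dots,\beta_n$ of $L_S$ are positive and $\sum_{i=1}^{n}\frac{1}{\beta_i}=\frac{n}{2\sqrt{3}}\cdot\frac{(2+\sqrt{3})^{n}-(2-\sqrt{3})^{n}}{(2+\sqrt{3})^{n}+(2-\sqrt{3})^{n}+2}$. -/

import Mathlib

/-- The matrix `L_S`: diagonal `4`, subdiagonal and superdiagonal `-1`,
corner entries `+1` at positions `(1,n)` and `(n,1)`. -/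
noncomputable def LS (n : ℕ) : Matrix (Fin n) (Fin n) ℝ :=
  Matrix.of fun i j =>
    if i = j then 4
    else if i.val + 1 = j.val ∨ j.val + 1 = i.val then -1
    else if (i.val = 0 ∧ j.val = n - 1) ∨ (i.val = n - 1 ∧ j.val = 0) then 1
    else 0

namespace Stmt4Aux
open scoped Matrix

noncomputable def aa : ℝ := 2 + Real.sqrt 3
noncomputable def bb : ℝ := 2 - Real.sqrt 3
lemma sqrt3_pos : 0 < Real.sqrt 3 := Real.sqrt_pos.2 (by norm_num)
lemma sqrt3_lt_two : Real.sqrt 3 < 2 := by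
  nlinarith [Real.sq_sqrt (by norm_num : (3:ℝ) ≥ 0), Real.sqrt_nonneg 3]
lemma bb_pos : 0 < bb := by simp [bb]; exact sqrt3_lt_two
lemma aa_pos : 0 < aa := by have := sqrt3_pos; simp [aa]; linarith
lemma hab : aa * bb = 1 := by
  have := Real.sq_sqrt (by norm_num : (3:ℝ) ≥ 0)
  simp [aa, bb]; nlinarith
lemma habsum : aa + bb = 4 := by simp [aa, bb]; ring
lemma habsub : aa - bb = 2 * Real.sqrt 3 := by simp [aa, bb]; ring
lemma hD_pos (n : ℕ) : 0 < aa ^ n + bb ^ n + 2 := by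
  have := pow_pos aa_pos n; have := pow_pos bb_pos n; linarith
lemma habsub_pos : 0 < aa - bb := by rw [habsub]; positivity
lemma hden (n : ℕ) : (aa - bb) * (aa ^ n + bb ^ n + 2) ≠ 0 :=
  ne_of_gt (mul_pos habsub_pos (hD_pos n))

noncomputable def f (n k : ℕ) : ℝ :=
  (aa ^ n * bb ^ k - bb ^ n * aa ^ k + bb ^ k - aa ^ k) / ((aa - bb) * (aa ^ n + bb ^ n + 2))

lemma hrec (n k : ℕ) : f n k + f n (k + 2) = 4 * f n (k + 1) := by
  have ha2 : aa ^ 2 = 4 * aa - 1 := by nlinarith [hab, habsum]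
  have hb2 : bb ^ 2 = 4 * bb - 1 := by nlinarith [hab, habsum]
  have key : (aa ^ n * bb ^ k - bb ^ n * aa ^ k + bb ^ k - aa ^ k) +
      (aa ^ n * bb ^ (k+2) - bb ^ n * aa ^ (k+2) + bb ^ (k+2) - aa ^ (k+2)) =
      4 * (aa ^ n * bb ^ (k+1) - bb ^ n * aa ^ (k+1) + bb ^ (k+1) - aa ^ (k+1)) := by
    rw [pow_add, pow_add, pow_add, pow_add, pow_one, pow_one]
    linear_combination (aa ^ n * bb ^ k + bb ^ k) * hb2 - (bb ^ n * aa ^ k + aa ^ k) * ha2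
  unfold f
  rw [← add_div, key, mul_div_assoc]

lemma hflip (n k : ℕ) (h : k ≤ n) : f n (n - k) = - f n k := by
  obtain ⟨m, rfl⟩ : ∃ m, n = m + k := ⟨n - k, by omega⟩
  have hm : aa ^ m * bb ^ m = 1 := by rw [← mul_pow, hab, one_pow]
  have hk : aa ^ k * bb ^ k = 1 := by rw [← mul_pow, hab, one_pow]
  have hmk : m + k - k = m := by omega
  have key : (aa ^ (m+k) * bb ^ m - bb ^ (m+k) * aa ^ m + bb ^ m - aa ^ m) =
      -(aa ^ (m+k) * bb ^ k - bb ^ (m+k) * aa ^ k + bb ^ k - aa ^ k) := by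
    rw [pow_add, pow_add]
    linear_combination (aa ^ k - bb ^ k) * hm + (aa ^ m - bb ^ m) * hk
  rw [hmk]; unfold f; rw [key, neg_div]

lemma hdiag (n : ℕ) : 4 * f n 0 - 2 * f n 1 = 1 := by
  unfold f
  rw [← mul_div_assoc, ← mul_div_assoc, div_sub_div_same, div_eq_one_iff_eq (hden n)]
  simp only [pow_zero, pow_one]
  linear_combination (bb ^ n - aa ^ n) * habsum

def SS (n : ℕ) : Matrix (Fin n) (Fin n) ℝ :=
  Matrix.of fun i j => if i.val = j.val + 1 then 1
    else if i.val = 0 ∧ j.val = n - 1 then -1 else 0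

lemma LS_eq (n : ℕ) (hn : 3 ≤ n) :
    LS n = (4 : ℝ) • (1 : Matrix (Fin n) (Fin n) ℝ) - SS n - (SS n)ᵀ := by
  ext i j
  have hi := i.isLt; have hj := j.isLt
  simp only [LS, SS, Matrix.of_apply, Matrix.sub_apply, Matrix.smul_apply,
    Matrix.one_apply, Matrix.transpose_apply, Fin.ext_iff, smul_eq_mul]
  split_ifs <;> first | (exfalso; omega) | norm_num

noncomputable def NN (n : ℕ) : Matrix (Fin n) (Fin n) ℝ :=
  Matrix.of fun i j => f n (Nat.dist i.val j.val)

lemma SS_mul_apply {n : ℕ} (hn : 3 ≤ n) (M : Matrix (Fin n) (Fin n) ℝ) (i j : Fin n) :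
    (SS n * M) i j =
      if i.val = 0 then -(M ⟨n - 1, by omega⟩ j)
      else M ⟨i.val - 1, lt_of_le_of_lt (Nat.sub_le _ _) i.isLt⟩ j := by
  rw [Matrix.mul_apply]
  split_ifs with h
  · rw [Finset.sum_eq_single (⟨n - 1, by omega⟩ : Fin n)]
    · have hSS : SS n i ⟨n - 1, by omega⟩ = -1 := by
        simp only [SS, Matrix.of_apply]
        rw [if_neg (show ¬(↑i = n - 1 + 1) from by omega)]
        simp [h]
      rw [hSS]; ring
    · intro k _ hk
      have hkv : k.val ≠ n - 1 := fun hv => hk (Fin.ext (by simp [hv]))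
      have hSS : SS n i k = 0 := by
        simp only [SS, Matrix.of_apply]
        rw [if_neg (by omega), if_neg (by tauto)]
      rw [hSS, zero_mul]
    · intro hmem; exact absurd (Finset.mem_univ _) hmem
  · rw [Finset.sum_eq_single (⟨i.val - 1, lt_of_le_of_lt (Nat.sub_le _ _) i.isLt⟩ : Fin n)]
    · have hSS : SS n i ⟨i.val - 1, lt_of_le_of_lt (Nat.sub_le _ _) i.isLt⟩ = 1 := by
        simp only [SS, Matrix.of_apply]
        rw [if_pos (show ↑i = ↑i - 1 + 1 from by omega)]
      rw [hSS, one_mul]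
    · intro k _ hk
      have hkv : k.val ≠ i.val - 1 := fun hv => hk (Fin.ext (by simp [hv]))
      have hSS : SS n i k = 0 := by
        simp only [SS, Matrix.of_apply]
        rw [if_neg (by omega), if_neg (by tauto)]
      rw [hSS, zero_mul]
    · intro hmem; exact absurd (Finset.mem_univ _) hmem

lemma SSt_mul_apply {n : ℕ} (hn : 3 ≤ n) (M : Matrix (Fin n) (Fin n) ℝ) (i j : Fin n) :
    ((SS n)ᵀ * M) i j =
      if h : i.val = n - 1 then -(M ⟨0, by omega⟩ j)
      else M ⟨i.val + 1, by have := i.isLt; omega⟩ j := by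
  rw [Matrix.mul_apply]
  split_ifs with h
  · rw [Finset.sum_eq_single (⟨0, by omega⟩ : Fin n)]
    · have hSS : (SS n)ᵀ i ⟨0, by omega⟩ = -1 := by
        simp only [SS, Matrix.transpose_apply, Matrix.of_apply]
        rw [if_neg (show ¬((0:ℕ) = ↑i + 1) from by omega)]
        simp [h]
      rw [hSS]; ring
    · intro k _ hk
      have hkv : k.val ≠ 0 := fun hv => hk (Fin.ext (by simp [hv]))
      have hSS : (SS n)ᵀ i k = 0 := by
        simp only [SS, Matrix.transpose_apply, Matrix.of_apply]
        rw [if_neg (by omega), if_neg (by tauto)]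
      rw [hSS, zero_mul]
    · intro hmem; exact absurd (Finset.mem_univ _) hmem
  · rw [Finset.sum_eq_single (⟨i.val + 1, by have := i.isLt; omega⟩ : Fin n)]
    · have hSS : (SS n)ᵀ i ⟨i.val + 1, by have := i.isLt; omega⟩ = 1 := by
        simp only [SS, Matrix.transpose_apply, Matrix.of_apply]
        simp
      rw [hSS, one_mul]
    · intro k _ hk
      have hkv : k.val ≠ i.val + 1 := fun hv => hk (Fin.ext (by simp [hv]))
      have hSS : (SS n)ᵀ i k = 0 := by
        simp only [SS, Matrix.transpose_apply, Matrix.of_apply]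
        rw [if_neg (by omega), if_neg (by omega)]
      rw [hSS, zero_mul]
    · intro hmem; exact absurd (Finset.mem_univ _) hmem

lemma LS_mul_NN {n : ℕ} (hn : 3 ≤ n) : LS n * NN n = 1 := by
  rw [LS_eq n hn]
  ext i j
  have hi := i.isLt; have hj := j.isLt
  rw [Matrix.sub_mul, Matrix.sub_mul, Matrix.smul_mul, Matrix.one_mul,
    Matrix.sub_apply, Matrix.sub_apply, Matrix.smul_apply,
    SS_mul_apply hn, SSt_mul_apply hn, Matrix.one_apply]
  simp only [NN, Matrix.of_apply, smul_eq_mul]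
  by_cases hi0 : i.val = 0
  · rw [if_pos hi0, dif_neg (show ¬(↑i = n - 1) from by omega)]
    by_cases hj0 : j.val = 0
    · rw [if_pos (Fin.ext (by omega))]
      rw [show Nat.dist i.val j.val = 0 from by simp only [Nat.dist]; omega,
        show Nat.dist (n-1) j.val = n - 1 from by simp only [Nat.dist]; omega,
        show Nat.dist (i.val+1) j.val = 1 from by simp only [Nat.dist]; omega]
      have h1 := hflip n 1 (by omega)
      have h2 := hdiag n
      linarith
    · rw [if_neg (by simp only [Fin.ext_iff]; omega)]
      obtain ⟨m, hm⟩ : ∃ m, j.val = m + 1 := ⟨j.val - 1, by omega⟩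
      rw [show Nat.dist i.val j.val = m + 1 from by simp only [Nat.dist]; omega,
        show Nat.dist (n-1) j.val = n - (m + 2) from by simp only [Nat.dist]; omega,
        show Nat.dist (i.val+1) j.val = m from by simp only [Nat.dist]; omega]
      have h1 := hflip n (m + 2) (by omega)
      have h2 := hrec n m
      linarith
  · rw [if_neg hi0]
    by_cases hin : i.val = n - 1
    · rw [dif_pos hin]
      by_cases hjn : j.val = n - 1
      · rw [if_pos (Fin.ext (by omega))]
        rw [show Nat.dist i.val j.val = 0 from by simp only [Nat.dist]; omega,
          show Nat.dist (i.val-1) j.val = 1 from by simp only [Nat.dist]; omega,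
          show Nat.dist 0 j.val = n - 1 from by simp only [Nat.dist]; omega]
        have h1 := hflip n 1 (by omega)
        have h2 := hdiag n
        linarith
      · rw [if_neg (by simp only [Fin.ext_iff]; omega)]
        obtain ⟨m, hm⟩ : ∃ m, n - 1 = j.val + m + 1 := ⟨n - 2 - j.val, by omega⟩
        rw [show Nat.dist i.val j.val = m + 1 from by simp only [Nat.dist]; omega,
          show Nat.dist (i.val-1) j.val = m from by simp only [Nat.dist]; omega,
          show Nat.dist 0 j.val = j.val from by simp only [Nat.dist]; omega]
        have h1 := hflip n j.val (by omega)
        rw [show n - j.val = m + 2 from by omega] at h1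
        have h2 := hrec n m
        linarith
    · rw [dif_neg hin]
      rcases lt_trichotomy j.val i.val with hlt | heq | hgt
      · rw [if_neg (by simp only [Fin.ext_iff]; omega)]
        obtain ⟨m, hm⟩ : ∃ m, i.val = j.val + m + 1 := ⟨i.val - j.val - 1, by omega⟩
        rw [show Nat.dist i.val j.val = m + 1 from by simp only [Nat.dist]; omega,
          show Nat.dist (i.val-1) j.val = m from by simp only [Nat.dist]; omega,
          show Nat.dist (i.val+1) j.val = m + 2 from by simp only [Nat.dist]; omega]
        have h2 := hrec n m
        linarith
      · rw [if_pos (Fin.ext (by omega))]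
        rw [show Nat.dist i.val j.val = 0 from by simp only [Nat.dist]; omega,
          show Nat.dist (i.val-1) j.val = 1 from by simp only [Nat.dist]; omega,
          show Nat.dist (i.val+1) j.val = 1 from by simp only [Nat.dist]; omega]
        have h2 := hdiag n
        linarith
      · rw [if_neg (by simp only [Fin.ext_iff]; omega)]
        obtain ⟨m, hm⟩ : ∃ m, j.val = i.val + m + 1 := ⟨j.val - i.val - 1, by omega⟩
        rw [show Nat.dist i.val j.val = m + 1 from by simp only [Nat.dist]; omega,
          show Nat.dist (i.val-1) j.val = m + 2 from by simp only [Nat.dist]; omega,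
          show Nat.dist (i.val+1) j.val = m from by simp only [Nat.dist]; omega]
        have h2 := hrec n m
        linarith

end Stmt4Aux

namespace Stmt4Aux
open scoped Matrix

lemma SS_mulVec {n : ℕ} (hn : 3 ≤ n) (x : Fin n → ℝ) (i : Fin n) :
    (SS n *ᵥ x) i =
      if i.val = 0 then -(x ⟨n - 1, by omega⟩)
      else x ⟨i.val - 1, lt_of_le_of_lt (Nat.sub_le _ _) i.isLt⟩ :=
  SS_mul_apply hn (Matrix.of fun k (_ : Fin n) => x k) i ⟨0, by omega⟩

lemma posdef {n : ℕ} (hn : 3 ≤ n) (hL : (LS n).IsHermitian) : (LS n).PosDef := by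
  refine Matrix.posDef_iff_dotProduct_mulVec.2 ⟨hL, fun x hx => ?_⟩
  have hstar : star x = x := by funext i; simp
  rw [hstar, LS_eq n hn, Matrix.sub_mulVec, Matrix.sub_mulVec, Matrix.smul_mulVec,
    Matrix.one_mulVec, dotProduct_sub, dotProduct_sub, dotProduct_smul]
  have htr : x ⬝ᵥ ((SS n)ᵀ *ᵥ x) = x ⬝ᵥ (SS n *ᵥ x) := by
    rw [Matrix.dotProduct_mulVec, Matrix.vecMul_transpose, dotProduct_comm]
  rw [htr]
  -- the predecessor bijection
  set p : Fin n → Fin n := fun i =>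
    ⟨if i.val = 0 then n - 1 else i.val - 1, by have := i.isLt; split_ifs <;> omega⟩ with hp
  have hpbij : Function.Bijective p := by
    apply Finite.injective_iff_bijective.1
    intro i k h
    have h1 : (p i).val = (p k).val := congrArg Fin.val h
    have hi := i.isLt; have hk := k.isLt
    apply Fin.ext
    simp only [hp] at h1
    split_ifs at h1 <;> omega
  have hmv : ∀ i : Fin n, x i * (SS n *ᵥ x) i ≤ (x i ^ 2 + x (p i) ^ 2) / 2 := by
    intro i
    rw [SS_mulVec hn]
    by_cases h0 : i.val = 0
    · rw [if_pos h0]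
      have hpe : p i = ⟨n - 1, by omega⟩ := Fin.ext (by simp [hp, h0])
      rw [hpe]
      nlinarith [sq_nonneg (x i + x (⟨n - 1, by omega⟩ : Fin n))]
    · rw [if_neg h0]
      have hpe : p i = ⟨i.val - 1, lt_of_le_of_lt (Nat.sub_le _ _) i.isLt⟩ :=
        Fin.ext (by simp [hp, h0])
      rw [hpe]
      nlinarith [sq_nonneg (x i - x (⟨i.val - 1, lt_of_le_of_lt (Nat.sub_le _ _) i.isLt⟩ : Fin n))]
  have hsum : ∑ i, x (p i) ^ 2 = ∑ i, x i ^ 2 :=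
    Fintype.sum_bijective p hpbij _ _ (fun i => rfl)
  have ht : x ⬝ᵥ (SS n *ᵥ x) ≤ ∑ i, x i ^ 2 := by
    calc x ⬝ᵥ (SS n *ᵥ x) = ∑ i, x i * (SS n *ᵥ x) i := rfl
      _ ≤ ∑ i, (x i ^ 2 + x (p i) ^ 2) / 2 := Finset.sum_le_sum (fun i _ => hmv i)
      _ = (∑ i, x i ^ 2 + ∑ i, x (p i) ^ 2) / 2 := by
          rw [← Finset.sum_add_distrib, ← Finset.sum_div]
      _ = ∑ i, x i ^ 2 := by rw [hsum]; ring
  have hxx : x ⬝ᵥ x = ∑ i, x i ^ 2 := by simp [dotProduct, sq]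
  have hpos : 0 < ∑ i, x i ^ 2 := by
    obtain ⟨i, hi⟩ := Function.ne_iff.1 hx
    exact Finset.sum_pos' (fun k _ => sq_nonneg _)
      ⟨i, Finset.mem_univ i, lt_of_le_of_ne (sq_nonneg _) (Ne.symm (pow_ne_zero 2 hi))⟩
  rw [hxx]
  simp only [smul_eq_mul]
  linarith

end Stmt4Aux

namespace Stmt4Aux
open scoped Matrix

lemma final_arith (n : ℕ) : (n : ℝ) * f n 0 =
    n / (2 * Real.sqrt 3) * ((aa ^ n - bb ^ n) / (aa ^ n + bb ^ n + 2)) := by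
  unfold f
  simp only [pow_zero]
  rw [habsub]
  have h1 : Real.sqrt 3 ≠ 0 := ne_of_gt sqrt3_pos
  have h2 : aa ^ n + bb ^ n + 2 ≠ 0 := ne_of_gt (hD_pos n)
  field_simp
  ring

end Stmt4Aux


theorem stmt4 (n : ℕ) (hn : 3 ≤ n) (hL : (LS n).IsHermitian) :
    (∀ i, 0 < hL.eigenvalues i) ∧
      ∑ i, (hL.eigenvalues i)⁻¹ =
        n / (2 * Real.sqrt 3) *
          (((2 + Real.sqrt 3) ^ n - (2 - Real.sqrt 3) ^ n) /
            ((2 + Real.sqrt 3) ^ n + (2 - Real.sqrt 3) ^ n + 2)) := by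
  classical
  have hPD := Stmt4Aux.posdef hn hL
  have hpos : ∀ i, 0 < hL.eigenvalues i := fun i => hPD.eigenvalues_pos i
  refine ⟨hpos, ?_⟩
  set ev := hL.eigenvalues with hev
  have hev0 : ∀ i, ev i ≠ 0 := fun i => ne_of_gt (hpos i)
  set U : Matrix (Fin n) (Fin n) ℝ := (hL.eigenvectorUnitary : Matrix (Fin n) (Fin n) ℝ) with hUdef
  have hUU : star U * U = 1 := Matrix.mem_unitaryGroup_iff'.mp hL.eigenvectorUnitary.2
  have hUU' : U * star U = 1 := Matrix.mem_unitaryGroup_iff.mp hL.eigenvectorUnitary.2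
  have hspec : LS n = U * Matrix.diagonal ev * star U := by
    have h := hL.spectral_theorem
    rwa [RCLike.ofReal_real_eq_id, Function.id_comp] at h
  set D' : Matrix (Fin n) (Fin n) ℝ := Matrix.diagonal (fun i => (ev i)⁻¹) with hD'
  have hone : LS n * (U * D' * star U) = 1 := by
    rw [hspec]
    calc U * Matrix.diagonal ev * star U * (U * D' * star U)
        = U * Matrix.diagonal ev * ((star U * U) * (D' * star U)) := by
          simp only [Matrix.mul_assoc]
      _ = U * (Matrix.diagonal ev * D') * star U := by
          rw [hUU, one_mul]; simp only [Matrix.mul_assoc]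
      _ = 1 := by
          rw [hD', Matrix.diagonal_mul_diagonal,
            show (fun i => ev i * (ev i)⁻¹) = fun _ => (1:ℝ) from
              funext fun i => mul_inv_cancel₀ (hev0 i),
            Matrix.diagonal_one, mul_one, hUU']
  have hNN : Stmt4Aux.NN n = U * D' * star U :=
    Matrix.right_inv_eq_right_inv (Stmt4Aux.LS_mul_NN hn) hone
  have htrace : Matrix.trace (Stmt4Aux.NN n) = ∑ i, (ev i)⁻¹ := by
    rw [hNN, Matrix.trace_mul_cycle, hUU, one_mul, hD', Matrix.trace_diagonal]
  have htrace2 : Matrix.trace (Stmt4Aux.NN n) = n * Stmt4Aux.f n 0 := by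
    have hdd : ∀ i : Fin n, (Stmt4Aux.NN n).diag i = Stmt4Aux.f n 0 := fun i => by
      simp [Stmt4Aux.NN, Matrix.diag, Nat.dist_self]
    rw [Matrix.trace]
    calc ∑ i, (Stmt4Aux.NN n).diag i = ∑ _i : Fin n, Stmt4Aux.f n 0 :=
        Finset.sum_congr rfl (fun i _ => hdd i)
      _ = n * Stmt4Aux.f n 0 := by
        rw [Finset.sum_const, Finset.card_univ, Fintype.card_fin, nsmul_eq_mul]
  have hfin : ∑ i, (ev i)⁻¹ = (n : ℝ) * Stmt4Aux.f n 0 := htrace.symm.trans htrace2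
  exact hfin.trans (Stmt4Aux.final_arith n)
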